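/- Let G be the dihedral group of order 2n (n ≥ 3), H its cyclic subgroup of rotations of order n, V the 1-dimensional representation of H over a field F containing a primitive n-th root of unity (with char F not dividing 2n) on which a generator of H acts by a primitive n-th root of unity, and W = Ind_H^G V the corresponding 2-dimensional irreducible G-module. Then β(G, W) = n = β(H, V). -/

import Mathlib

noncomputable section
open MvPolynomial

variable {F : Type} [Field F]

/-- The algebra homomorphism between polynomial algebras (viewed as symmetric algebras)
induced by a linear map between the spaces of variables (the degree one components). -/
noncomputable def algOf {α β : Type} [Fintype α] [Fintype β] [DecidableEq α]
    (f : (α → F) →ₗ[F] (β → F)) :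
    MvPolynomial α F →ₐ[F] MvPolynomial β F :=
  aeval fun j => ∑ i, f (Pi.single j 1) i • X i

/-- The embedding of the space of linear forms into the polynomial algebra. -/
noncomputable def lin {β : Type} [Fintype β] (w : β → F) : MvPolynomial β F :=
  ∑ i, w i • X i

/-- The subalgebra of `G`-invariants of the symmetric algebra of a representation. -/
def invariants {G : Type} [Group G] {α : Type} [Fintype α] [DecidableEq α]
    (ρ : Representation F G (α → F)) : Subalgebra F (MvPolynomial α F) where
  carrier := {p | ∀ g : G, algOf (ρ g) p = p}
  mul_mem' := fun ha hb g => by rw [map_mul, ha g, hb g]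
  add_mem' := fun ha hb g => by rw [map_add, ha g, hb g]
  algebraMap_mem' := fun r g => (algOf (ρ g)).commutes r

variable {G : Type} [Group G] {α : Type} [Fintype α] [DecidableEq α]

/-- The invariant ring is generated as an `F`-algebra in degrees at most `d`. -/
def genLE (ρ : Representation F G (α → F)) (d : ℕ) : Prop :=
  Algebra.adjoin F {p : MvPolynomial α F | p ∈ invariants ρ ∧ p.totalDegree ≤ d}
    = invariants ρ

/-- The Noether number `β(G,W)` of a representation. -/
def noether (ρ : Representation F G (α → F)) : ℕ := sInf {d | genLE ρ d}

/-- The Hilbert ideal: the ideal of `S(W)` generated by the invariants of positive degree. -/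
def hilbertIdeal (ρ : Representation F G (α → F)) : Ideal (MvPolynomial α F) :=
  Ideal.span {p | p ∈ invariants ρ ∧ constantCoeff p = 0}

/-- `b(G,W)`: the top degree of the algebra of coinvariants `S(W)/S(W)₊^G S(W)`. -/
def coinvTop (ρ : Representation F G (α → F)) : ℕ :=
  sSup {d | ∃ p : MvPolynomial α F, p.IsHomogeneous d ∧ p ∉ hilbertIdeal ρ}

/-- `b_k(G,W)`: the top degree of `S(W)/((S(W)₊^G)^k S(W))`. -/
def coinvTopK (ρ : Representation F G (α → F)) (k : ℕ) : ℕ :=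
  sSup {d | ∃ p : MvPolynomial α F, p.IsHomogeneous d ∧ p ∉ (hilbertIdeal ρ) ^ k}

/-- The span of all products of `k` positive-degree invariants,
i.e. `(S(W)₊^G)^k` computed inside the invariant ring. -/
def prodPow (ρ : Representation F G (α → F)) (k : ℕ) : Submodule F (MvPolynomial α F) :=
  Submodule.span F {x | ∃ f : Fin k → MvPolynomial α F,
    (∀ i, f i ∈ invariants ρ ∧ constantCoeff (f i) = 0) ∧ x = ∏ i, f i}

/-- The `k`-th Noether number `β_k(G,W)`, the top degree of `S(W)^G/(S(W)₊^G)^{k+1}`. -/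
def noetherK (ρ : Representation F G (α → F)) (k : ℕ) : ℕ :=
  sSup {d | ∃ p, p ∈ invariants ρ ∧ p.IsHomogeneous d ∧ p ∉ prodPow ρ (k+1)}

/-- `β(G)`: the supremum of the Noether numbers over all finite dimensional modules. -/
def noetherSup (F G : Type) [Field F] [Group G] : ℕ∞ :=
  ⨆ (n : ℕ) (ρ : Representation F G (Fin n → F)), (noether ρ : ℕ∞)

/-- `b(G)`: the supremum of `b(G,W)` over all finite dimensional modules. -/
def coinvSup (F G : Type) [Field F] [Group G] : ℕ∞ :=
  ⨆ (n : ℕ) (ρ : Representation F G (Fin n → F)), (coinvTop ρ : ℕ∞)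

/-- `β_k(G)`: the supremum of the `k`-th Noether numbers over all modules. -/
def noetherKSup (F G : Type) [Field F] [Group G] (k : ℕ) : ℕ∞ :=
  ⨆ (n : ℕ) (ρ : Representation F G (Fin n → F)), (noetherK ρ k : ℕ∞)


set_option maxHeartbeats 800000 in
set_option synthInstance.maxHeartbeats 400000 in
theorem algOf_comp {α β γ : Type} [Fintype α] [Fintype β] [Fintype γ] [DecidableEq α]
    [DecidableEq β] (f : (β → F) →ₗ[F] (γ → F)) (g : (α → F) →ₗ[F] (β → F)) :
    algOf (f ∘ₗ g) = (algOf f).comp (algOf g) := by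
  apply MvPolynomial.algHom_ext
  intro j
  simp only [algOf, aeval_X, AlgHom.comp_apply]
  rw [map_sum]
  simp only [map_smul, aeval_X, Finset.smul_sum]
  rw [Finset.sum_comm]
  apply Finset.sum_congr rfl
  intro i _
  have hg : g (Pi.single j 1) = ∑ x, g (Pi.single j 1) x • (Pi.single x 1 : β → F) := by
    ext y; simp [Pi.single_apply, Finset.sum_ite_eq']
  have : (f ∘ₗ g) (Pi.single j 1) i = ∑ x, g (Pi.single j 1) x * f (Pi.single x 1) i := by
    rw [LinearMap.comp_apply, hg, map_sum, Finset.sum_apply]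
    simp [smul_eq_mul, Pi.single_apply, Finset.sum_ite_eq']
  rw [this, Finset.sum_smul]
  apply Finset.sum_congr rfl
  intro x _
  rw [mul_smul]

theorem algOf_id {α : Type} [Fintype α] [DecidableEq α] :
    (algOf (LinearMap.id : (α → F) →ₗ[F] (α → F))) = AlgHom.id F _ := by
  apply MvPolynomial.algHom_ext
  intro j
  simp [algOf, Pi.single_apply, Finset.sum_ite_eq']
theorem totalDegree_algOf_le {α β : Type} [Fintype α] [Fintype β] [DecidableEq α]
    (f : (α → F) →ₗ[F] (β → F)) (p : MvPolynomial α F) :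
    (algOf f p).totalDegree ≤ p.totalDegree := by
  conv_lhs => rw [p.as_sum]
  rw [map_sum]
  refine (MvPolynomial.totalDegree_finset_sum _ _).trans (Finset.sup_le ?_)
  intro m hm
  have h1 : (algOf f (monomial m (coeff m p))).totalDegree ≤ m.sum fun _ e => e := by
    rw [algOf, aeval_monomial]
    refine (MvPolynomial.totalDegree_mul _ _).trans ?_
    have h0 : (algebraMap F (MvPolynomial β F) (coeff m p)).totalDegree = 0 :=
      totalDegree_C _
    rw [h0, zero_add, Finsupp.prod, Finsupp.sum]
    refine (MvPolynomial.totalDegree_finset_prod _ _).trans ?_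
    refine Finset.sum_le_sum ?_
    intro i _
    refine (MvPolynomial.totalDegree_pow _ _).trans ?_
    have hL : (∑ k, f (Pi.single i 1) k • X k : MvPolynomial β F).totalDegree ≤ 1 := by
      refine (MvPolynomial.totalDegree_finset_sum _ _).trans (Finset.sup_le ?_)
      intro k _
      exact (MvPolynomial.totalDegree_smul_le _ _).trans (le_of_eq (totalDegree_X k))
    calc m i * (∑ k, f (Pi.single i 1) k • X k : MvPolynomial β F).totalDegree
        ≤ m i * 1 := Nat.mul_le_mul_left _ hL
      _ = m i := Nat.mul_one _
  exact h1.trans (MvPolynomial.le_totalDegree hm)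
section Transport

variable {G : Type} [Group G] {α β : Type} [Fintype α] [Fintype β] [DecidableEq α] [DecidableEq β]

/-- The algebra equivalence induced by a linear equivalence of variable spaces. -/
def algEquivOf (T : (β → F) ≃ₗ[F] (α → F)) :
    MvPolynomial β F ≃ₐ[F] MvPolynomial α F :=
  AlgEquiv.ofAlgHom (algOf T.toLinearMap) (algOf T.symm.toLinearMap)
    (by rw [← algOf_comp]
        have : T.toLinearMap ∘ₗ T.symm.toLinearMap = LinearMap.id := by
          ext x; simp
        rw [this, algOf_id])
    (by rw [← algOf_comp]
        have : T.symm.toLinearMap ∘ₗ T.toLinearMap = LinearMap.id := by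
          ext x; simp
        rw [this, algOf_id])

theorem algEquivOf_symm_apply (T : (β → F) ≃ₗ[F] (α → F)) (p : MvPolynomial α F) :
    (algEquivOf T).symm p = algOf T.symm.toLinearMap p := rfl

theorem algEquivOf_apply (T : (β → F) ≃ₗ[F] (α → F)) (p : MvPolynomial β F) :
    algEquivOf T p = algOf T.toLinearMap p := rfl

theorem totalDegree_algEquivOf (T : (β → F) ≃ₗ[F] (α → F)) (p : MvPolynomial β F) :
    (algEquivOf T p).totalDegree = p.totalDegree := by
  refine le_antisymm (totalDegree_algOf_le _ _) ?_
  have := totalDegree_algOf_le T.symm.toLinearMap (algEquivOf T p)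
  rw [← algEquivOf_symm_apply, AlgEquiv.symm_apply_apply] at this
  exact this

variable (σ : Representation F G (α → F)) (τ : Representation F G (β → F))
  (T : (β → F) ≃ₗ[F] (α → F))

theorem mem_invariants_conj
    (hconj : ∀ g, τ g = T.symm.toLinearMap ∘ₗ σ g ∘ₗ T.toLinearMap)
    (p : MvPolynomial α F) :
    p ∈ invariants σ ↔ (algEquivOf T).symm p ∈ invariants τ := by
  have key : ∀ g : G, algOf (τ g) ((algEquivOf T).symm p)
      = (algEquivOf T).symm (algOf (σ g) p) := by
    intro g
    rw [hconj g, algOf_comp, algOf_comp]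
    simp only [AlgHom.comp_apply]
    rw [algEquivOf_symm_apply, algEquivOf_symm_apply]
    congr 1
    have : algOf T.toLinearMap (algOf T.symm.toLinearMap p) = p := by
      rw [← algEquivOf_apply, ← algEquivOf_symm_apply, AlgEquiv.apply_symm_apply]
    rw [this]
  constructor
  · intro hp g
    rw [key g, hp g]
  · intro hp g
    have := hp g
    rw [key g] at this
    exact (algEquivOf T).symm.injective this

theorem genLE_conj
    (hconj : ∀ g, τ g = T.symm.toLinearMap ∘ₗ σ g ∘ₗ T.toLinearMap)
    (d : ℕ) (hd : genLE τ d) : genLE σ d := by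
  have hset : {p : MvPolynomial α F | p ∈ invariants σ ∧ p.totalDegree ≤ d}
      = (algEquivOf T) '' {p : MvPolynomial β F | p ∈ invariants τ ∧ p.totalDegree ≤ d} := by
    ext p
    constructor
    · rintro ⟨h1, h2⟩
      refine ⟨(algEquivOf T).symm p, ⟨(mem_invariants_conj σ τ T hconj p).1 h1, ?_⟩,
        AlgEquiv.apply_symm_apply _ _⟩
      have := totalDegree_algEquivOf T ((algEquivOf T).symm p)
      rw [AlgEquiv.apply_symm_apply] at this
      exact this.symm.trans_le h2
    · rintro ⟨q, ⟨h1, h2⟩, rfl⟩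
      constructor
      · rw [mem_invariants_conj σ τ T hconj, AlgEquiv.symm_apply_apply]; exact h1
      · rw [totalDegree_algEquivOf]; exact h2
  have hmap : (invariants τ).map (algEquivOf T).toAlgHom = invariants σ := by
    ext x
    simp only [Subalgebra.mem_map]
    constructor
    · rintro ⟨y, hy, rfl⟩
      rw [mem_invariants_conj σ τ T hconj]
      simpa [AlgEquiv.symm_apply_apply] using hy
    · intro hx
      exact ⟨(algEquivOf T).symm x, (mem_invariants_conj σ τ T hconj x).1 hx,
        AlgEquiv.apply_symm_apply _ _⟩
  unfold genLE
  rw [hset]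
  have himg : ⇑(algEquivOf T) '' {p : MvPolynomial β F | p ∈ invariants τ ∧ p.totalDegree ≤ d}
      = ⇑(algEquivOf T).toAlgHom '' {p : MvPolynomial β F | p ∈ invariants τ ∧ p.totalDegree ≤ d} := rfl
  rw [himg, ← AlgHom.map_adjoin]
  rw [show Algebra.adjoin F {p : MvPolynomial β F | p ∈ invariants τ ∧ p.totalDegree ≤ d}
      = invariants τ from hd]
  exact hmap

end Transport
section Diag

variable {α : Type} [Fintype α] [DecidableEq α]

theorem algOf_smul_id (c : F) :
    algOf (c • (LinearMap.id : (α → F) →ₗ[F] (α → F)))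
      = aeval (fun j : α => c • X j : α → MvPolynomial α F) := by
  apply MvPolynomial.algHom_ext
  intro j
  simp only [algOf, aeval_X]
  rw [show (∑ i, (c • (LinearMap.id : (α → F) →ₗ[F] (α → F))) (Pi.single j 1) i • X i)
      = ∑ i, (c * (Pi.single j 1 : α → F) i) • X i from by
    apply Finset.sum_congr rfl; intro i _
    simp [LinearMap.smul_apply, smul_eq_mul]]
  simp [Pi.single_apply, mul_ite, ite_smul, Finset.sum_ite_eq']

theorem aeval_diag_monomial (w : α → F) (m : α →₀ ℕ) (a : F) :
    aeval (fun j : α => w j • X j : α → MvPolynomial α F) (monomial m a)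
      = monomial m ((m.prod fun i k => w i ^ k) * a) := by
  rw [aeval_monomial]
  have h1 : (m.prod fun (i : α) (k : ℕ) => (w i • X i : MvPolynomial α F) ^ k)
      = C (m.prod fun i k => w i ^ k) * m.prod fun (i : α) (k : ℕ) => (X i : MvPolynomial α F) ^ k := by
    rw [Finsupp.prod, Finsupp.prod, Finsupp.prod, map_prod, ← Finset.prod_mul_distrib]
    apply Finset.prod_congr rfl
    intro i _
    rw [smul_pow, smul_eq_C_mul]
  rw [h1, algebraMap_eq, mul_left_comm, ← mul_assoc, ← C_mul, ← monomial_eq]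

theorem coeff_aeval_diag (w : α → F) (p : MvPolynomial α F) (m : α →₀ ℕ) :
    coeff m (aeval (fun j : α => w j • X j : α → MvPolynomial α F) p)
      = (m.prod fun i k => w i ^ k) * coeff m p := by
  conv_lhs => rw [p.as_sum]
  rw [map_sum]
  simp only [aeval_diag_monomial]
  rw [MvPolynomial.coeff_sum]
  simp only [coeff_monomial]
  rw [Finset.sum_ite_eq' p.support m (fun m' => (m'.prod fun i k => w i ^ k) * coeff m' p)]
  split_ifs with h
  · rfl
  · rw [MvPolynomial.notMem_support_iff.1 h, mul_zero]

end Diag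
theorem algOf_pow_fixed {α : Type} [Fintype α] [DecidableEq α]
    (f : (α → F) →ₗ[F] (α → F)) (p : MvPolynomial α F) (h : algOf f p = p) (k : ℕ) :
    algOf (f ^ k) p = p := by
  induction k with
  | zero =>
    have : (f ^ 0 : (α → F) →ₗ[F] (α → F)) = LinearMap.id := by
      rw [pow_zero]; rfl
    rw [this, algOf_id]; rfl
  | succ k ih =>
    have : f ^ (k + 1) = (f ^ k) ∘ₗ f := by rw [pow_succ]; rfl
    rw [this, algOf_comp]
    simp only [AlgHom.comp_apply]
    rw [h, ih]

theorem partA {n : ℕ} (hn : 3 ≤ n) (ζ : F) (hζ : IsPrimitiveRoot ζ n)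
    {G : Type} [Group G] (h0 : G) (hgen : ∀ g : G, ∃ k : ℕ, h0 ^ k = g)
    (ρ : Representation F G (Fin 1 → F)) (hρ : ρ h0 = ζ • LinearMap.id) :
    noether ρ = n := by
  have hn0 : n ≠ 0 := by omega
  have hζ0 : ζ ≠ 0 := hζ.ne_zero hn0
  -- the action of any group element
  have hact : ∀ g : G, ∃ k : ℕ, ρ g = (ζ ^ k) • LinearMap.id := by
    intro g
    obtain ⟨k, rfl⟩ := hgen g
    refine ⟨k, ?_⟩
    rw [map_pow, hρ, smul_pow]
    congr 1
    exact one_pow k  -- id ^ k = id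
  -- X 0 ^ n is invariant
  have hXn : (X 0 ^ n : MvPolynomial (Fin 1) F) ∈ invariants ρ := by
    intro g
    obtain ⟨k, hk⟩ := hact g
    rw [hk, algOf_smul_id, map_pow, aeval_X, smul_pow, ← pow_mul, mul_comm k n, pow_mul,
      hζ.pow_eq_one, one_pow, one_smul]
  -- support of an invariant polynomial
  have hsupp : ∀ p : MvPolynomial (Fin 1) F, p ∈ invariants ρ →
      ∀ m ∈ p.support, n ∣ m 0 := by
    intro p hp m hm
    have h1 := hp h0
    rw [hρ, algOf_smul_id] at h1
    have h2 := coeff_aeval_diag (fun _ : Fin 1 => ζ) p m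
    rw [h1] at h2
    have h3 : (m.prod fun _ k => ζ ^ k) = ζ ^ (m 0) := by
      rw [Finsupp.prod_fintype _ _ (fun i => pow_zero ζ), Fin.prod_univ_one]
    rw [h3] at h2
    have h4 : coeff m p ≠ 0 := MvPolynomial.mem_support_iff.1 hm
    have h5 : ζ ^ (m 0) = 1 :=
      mul_right_cancel₀ h4 (by rw [one_mul]; exact h2.symm)
    exact (hζ.pow_eq_one_iff_dvd _).1 h5
  -- degree of X 0 ^ n
  have hdeg : (X 0 ^ n : MvPolynomial (Fin 1) F).totalDegree = n :=
    MvPolynomial.totalDegree_X_pow _ _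
  -- upper bound: genLE ρ n
  have hup : genLE ρ n := by
    apply le_antisymm
    · exact Algebra.adjoin_le fun p hp => hp.1
    · intro p hp
      rw [p.as_sum]
      apply Subalgebra.sum_mem
      intro m hm
      obtain ⟨k, hk⟩ := hsupp p hp m hm
      have hmeq : m = Finsupp.single 0 (n * k) := by
        refine Finsupp.ext fun i => ?_
        have : i = 0 := Subsingleton.elim i 0
        subst this
        rw [Finsupp.single_apply, if_pos rfl, hk]
      have hmon : (monomial m (coeff m p) : MvPolynomial (Fin 1) F)
          = C (coeff m p) * (X 0 ^ n) ^ k := by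
        rw [hmeq, ← pow_mul, X_pow_eq_monomial, C_mul_monomial, mul_one]
      rw [hmon]
      apply Subalgebra.mul_mem
      · exact Subalgebra.algebraMap_mem _ _
      · apply Subalgebra.pow_mem
        exact Algebra.subset_adjoin ⟨hXn, le_of_eq hdeg⟩
  -- lower bound
  have hlow : ∀ d, genLE ρ d → n ≤ d := by
    intro d hd
    by_contra hlt
    push_neg at hlt
    have hsub : {p : MvPolynomial (Fin 1) F | p ∈ invariants ρ ∧ p.totalDegree ≤ d}
        ⊆ (⊥ : Subalgebra F (MvPolynomial (Fin 1) F)) := by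
      rintro p ⟨hp1, hp2⟩
      have hps : ∀ m ∈ p.support, m = 0 := by
        intro m hm
        have h1 := hsupp p hp1 m hm
        have h2 : (m.sum fun _ e => e) ≤ p.totalDegree := MvPolynomial.le_totalDegree hm
        have h3 : (m.sum fun _ e => e) = m 0 := by
          rw [Finsupp.sum_fintype _ _ (fun i => rfl), Fin.sum_univ_one]
        rw [h3] at h2
        have h4 : m 0 = 0 := by
          rcases Nat.eq_zero_or_pos (m 0) with h | h
          · exact h
          · exfalso
            have := Nat.le_of_dvd h h1
            omega
        refine Finsupp.ext fun i => ?_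
        have : i = 0 := Subsingleton.elim i 0
        subst this
        simpa using h4
      have : p = C (coeff 0 p) := by
        rcases Finset.eq_empty_or_nonempty p.support with h | h
        · rw [MvPolynomial.support_eq_empty.1 h]; simp
        · have hsup : p.support = {0} :=
            Finset.eq_singleton_iff_nonempty_unique_mem.2 ⟨h, hps⟩
          conv_lhs => rw [p.as_sum, hsup, Finset.sum_singleton]
          rw [MvPolynomial.C_apply]
      rw [this]
      exact Subalgebra.algebraMap_mem _ _
    have hXn' : (X 0 ^ n : MvPolynomial (Fin 1) F) ∈ Algebra.adjoin F
        {p : MvPolynomial (Fin 1) F | p ∈ invariants ρ ∧ p.totalDegree ≤ d} := by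
      rw [hd]; exact hXn
    have hbot : (X 0 ^ n : MvPolynomial (Fin 1) F) ∈ (⊥ : Subalgebra F (MvPolynomial (Fin 1) F)) := by
      have := Algebra.adjoin_le (R := F) hsub
      exact this hXn'
    rw [Algebra.mem_bot] at hbot
    obtain ⟨r, hr⟩ := hbot
    have h1 : coeff (Finsupp.single 0 n) ((algebraMap F (MvPolynomial (Fin 1) F)) r) = 0 := by
      rw [MvPolynomial.algebraMap_eq, MvPolynomial.coeff_C, if_neg]
      intro h
      exact hn0 (by simpa using (Finsupp.single_eq_zero.1 h.symm))
    rw [hr, MvPolynomial.coeff_X_pow, if_pos rfl] at h1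
    exact one_ne_zero h1
  -- conclude
  apply le_antisymm
  · exact Nat.sInf_le hup
  · exact le_csInf ⟨n, hup⟩ hlow
section PartB

theorem pow_mod_eq_of_pow_eq {n : ℕ} {ζ : F} (hζ : IsPrimitiveRoot ζ n) (hn0 : n ≠ 0)
    {a b : ℕ} (h : ζ ^ a = ζ ^ b) : a % n = b % n := by
  have hζ0 : ζ ≠ 0 := hζ.ne_zero hn0
  have key : ∀ a b : ℕ, a ≤ b → ζ ^ a = ζ ^ b → a % n = b % n := by
    intro a b hab h
    have h1 : ζ ^ b = ζ ^ a * ζ ^ (b - a) := by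
      rw [← pow_add, Nat.add_sub_cancel' hab]
    rw [h1] at h
    have h2 : ζ ^ (b - a) = 1 := by
      have h' : ζ ^ a * ζ ^ (b - a) = ζ ^ a * 1 := by rw [mul_one]; exact h.symm
      exact mul_left_cancel₀ (pow_ne_zero a hζ0) h'
    have h3 : n ∣ b - a := (hζ.pow_eq_one_iff_dvd _).1 h2
    exact (Nat.modEq_iff_dvd' hab).2 h3
  rcases le_total a b with hab | hab
  · exact key a b hab h
  · exact (key b a hab h.symm).symm

/-- `x^a y^b` as a monomial exponent. -/
def ms (a b : ℕ) : Fin 2 →₀ ℕ := Finsupp.single 0 a + Finsupp.single 1 b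

theorem monomial_ms (a b : ℕ) :
    (monomial (ms a b) (1:F)) = X 0 ^ a * X 1 ^ b := by
  rw [ms, X_pow_eq_monomial, X_pow_eq_monomial, monomial_mul, one_mul]

theorem qk_mem {n : ℕ} (A : Subalgebra F (MvPolynomial (Fin 2) F))
    (hf2 : (X 0 * X 1 : MvPolynomial (Fin 2) F) ∈ A)
    (hfn : (X 0 ^ n + X 1 ^ n : MvPolynomial (Fin 2) F) ∈ A) (k : ℕ) :
    (X 0 ^ (n * k) + X 1 ^ (n * k) : MvPolynomial (Fin 2) F) ∈ A := by
  have key : ∀ k : ℕ, ((X 0 ^ (n * k) + X 1 ^ (n * k) : MvPolynomial (Fin 2) F) ∈ A)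
      ∧ ((X 0 ^ (n * (k+1)) + X 1 ^ (n * (k+1)) : MvPolynomial (Fin 2) F) ∈ A) := by
    intro k
    induction k with
    | zero =>
      constructor
      · rw [Nat.mul_zero, pow_zero, pow_zero]
        exact A.add_mem A.one_mem A.one_mem
      · rw [Nat.mul_one]; exact hfn
    | succ k ih =>
      refine ⟨ih.2, ?_⟩
      have hid : (X 0 ^ (n * (k+2)) + X 1 ^ (n * (k+2)) : MvPolynomial (Fin 2) F)
          = (X 0 ^ n + X 1 ^ n) * (X 0 ^ (n * (k+1)) + X 1 ^ (n * (k+1)))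
            - (X 0 * X 1) ^ n * (X 0 ^ (n * k) + X 1 ^ (n * k)) := by
        ring
      rw [show n * (k + 1 + 1) = n * (k + 2) by ring, hid]
      exact A.sub_mem (A.mul_mem hfn ih.2) (A.mul_mem (A.pow_mem hf2 n) ih.1)
  exact (key k).1

theorem pair_mem_aux {n : ℕ} (A : Subalgebra F (MvPolynomial (Fin 2) F))
    (hf2 : (X 0 * X 1 : MvPolynomial (Fin 2) F) ∈ A)
    (hfn : (X 0 ^ n + X 1 ^ n : MvPolynomial (Fin 2) F) ∈ A)
    (a b : ℕ) (hab : a ≤ b) (hmod : a % n = b % n) :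
    (monomial (ms b a) (1:F)) + (monomial (ms a b) (1:F)) ∈ A := by
  have hdvd : n ∣ b - a := (Nat.modEq_iff_dvd' hab).1 hmod
  obtain ⟨k, hk⟩ := hdvd
  have hb : b = a + n * k := by omega
  have hid : (monomial (ms b a) (1:F)) + (monomial (ms a b) (1:F))
      = (X 0 * X 1) ^ a * (X 0 ^ (n * k) + X 1 ^ (n * k)) := by
    rw [monomial_ms, monomial_ms, hb]
    ring
  rw [hid]
  exact A.mul_mem (A.pow_mem hf2 a) (qk_mem A hf2 hfn k)

theorem pair_mem {n : ℕ} (A : Subalgebra F (MvPolynomial (Fin 2) F))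
    (hf2 : (X 0 * X 1 : MvPolynomial (Fin 2) F) ∈ A)
    (hfn : (X 0 ^ n + X 1 ^ n : MvPolynomial (Fin 2) F) ∈ A)
    (a b : ℕ) (hmod : a % n = b % n) :
    (monomial (ms a b) (1:F)) + (monomial (ms b a) (1:F)) ∈ A := by
  rcases le_total a b with hab | hab
  · rw [add_comm]; exact pair_mem_aux A hf2 hfn a b hab hmod
  · exact pair_mem_aux A hf2 hfn b a hab hmod.symm

end PartB
theorem partB' {n : ℕ} (hn : 3 ≤ n) (ζ : F) (hζ : IsPrimitiveRoot ζ n) (h2F : (2:F) ≠ 0)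
    (τ : Representation F (DihedralGroup n) (Fin 2 → F)) (j : ZMod n)
    (hAr : algOf (τ (DihedralGroup.r 1))
      = aeval (fun i : Fin 2 => (if i = (0:Fin 2) then ζ else ζ⁻¹) • X i))
    (hAs : algOf (τ (DihedralGroup.sr j))
      = (rename (Equiv.swap (0:Fin 2) 1) : MvPolynomial (Fin 2) F →ₐ[F] MvPolynomial (Fin 2) F)) :
    noether τ = n := by
  have hn0 : n ≠ 0 := by omega
  haveI : NeZero n := ⟨hn0⟩
  have hζ0 : ζ ≠ 0 := hζ.ne_zero hn0
  -- invariance under rotations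
  have hinv_r : ∀ (p : MvPolynomial (Fin 2) F),
      aeval (fun i : Fin 2 => (if i = (0:Fin 2) then ζ else ζ⁻¹) • X i) p = p →
      ∀ k : ZMod n, algOf (τ (DihedralGroup.r k)) p = p := by
    intro p hp k
    have hk : DihedralGroup.r k = (DihedralGroup.r 1 : DihedralGroup n) ^ (k.val) := by
      rw [DihedralGroup.r_one_pow]
      congr 1
      simp [ZMod.natCast_val, ZMod.cast_id]
    rw [hk, map_pow]
    exact algOf_pow_fixed _ p (by rw [hAr]; exact hp) _
  -- invariance from the two generators
  have hinv : ∀ (p : MvPolynomial (Fin 2) F),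
      aeval (fun i : Fin 2 => (if i = (0:Fin 2) then ζ else ζ⁻¹) • X i) p = p →
      rename (Equiv.swap (0:Fin 2) 1) p = p → p ∈ invariants τ := by
    intro p hp1 hp2 g
    match g with
    | .r k => exact hinv_r p hp1 k
    | .sr k =>
      have hdecomp : (DihedralGroup.sr k : DihedralGroup n)
          = DihedralGroup.sr j * DihedralGroup.r (k - j) := by
        rw [DihedralGroup.sr_mul_r, add_sub_cancel]
      rw [hdecomp, map_mul]
      have : τ (DihedralGroup.sr j) * τ (DihedralGroup.r (k - j))
          = τ (DihedralGroup.sr j) ∘ₗ τ (DihedralGroup.r (k - j)) := rfl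
      rw [this, algOf_comp]
      simp only [AlgHom.comp_apply]
      rw [hinv_r p hp1 (k - j), hAs]
      exact hp2
  -- the two basic invariants
  have hf2 : (X 0 * X 1 : MvPolynomial (Fin 2) F) ∈ invariants τ := by
    apply hinv
    · rw [map_mul, aeval_X, aeval_X, if_pos rfl, if_neg (by decide)]
      rw [smul_mul_smul_comm, mul_inv_cancel₀ hζ0, one_smul]
    · rw [map_mul, rename_X, rename_X, Equiv.swap_apply_left, Equiv.swap_apply_right, mul_comm]
  have hfn : (X 0 ^ n + X 1 ^ n : MvPolynomial (Fin 2) F) ∈ invariants τ := by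
    apply hinv
    · rw [map_add, map_pow, map_pow, aeval_X, aeval_X, if_pos rfl, if_neg (by decide),
        smul_pow, smul_pow, hζ.pow_eq_one, inv_pow, hζ.pow_eq_one, inv_one, one_smul, one_smul]
    · rw [map_add, map_pow, map_pow, rename_X, rename_X, Equiv.swap_apply_left,
        Equiv.swap_apply_right, add_comm]
  have hdegf2 : (X 0 * X 1 : MvPolynomial (Fin 2) F).totalDegree ≤ n := by
    refine (MvPolynomial.totalDegree_mul _ _).trans ?_
    rw [totalDegree_X, totalDegree_X]
    omega
  have hdegfn : (X 0 ^ n + X 1 ^ n : MvPolynomial (Fin 2) F).totalDegree ≤ n := by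
    refine (MvPolynomial.totalDegree_add _ _).trans ?_
    rw [MvPolynomial.totalDegree_X_pow, MvPolynomial.totalDegree_X_pow, max_self]
  -- support congruence for invariants
  have hmodm : ∀ p : MvPolynomial (Fin 2) F, p ∈ invariants τ →
      ∀ m ∈ p.support, (m 0) % n = (m 1) % n := by
    intro p hp m hm
    have hpr := hp (DihedralGroup.r 1)
    rw [hAr] at hpr
    have h2 := coeff_aeval_diag (fun i : Fin 2 => if i = (0:Fin 2) then ζ else ζ⁻¹) p m
    rw [hpr] at h2
    have h3 : (m.prod fun i k => (if i = (0:Fin 2) then ζ else ζ⁻¹) ^ k)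
        = ζ ^ (m 0) * (ζ⁻¹) ^ (m 1) := by
      rw [Finsupp.prod_fintype _ _ (fun i => pow_zero _), Fin.prod_univ_two,
        if_pos rfl, if_neg (by decide)]
    rw [h3] at h2
    have h4 : coeff m p ≠ 0 := MvPolynomial.mem_support_iff.1 hm
    have h5 : ζ ^ (m 0) * (ζ⁻¹) ^ (m 1) = 1 :=
      mul_right_cancel₀ h4 (by rw [one_mul]; exact h2.symm)
    rw [inv_pow] at h5
    have h6 : ζ ^ (m 0) = ζ ^ (m 1) :=
      (mul_inv_eq_one₀ (pow_ne_zero _ hζ0)).1 h5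
    exact pow_mod_eq_of_pow_eq hζ hn0 h6
  -- finsupp facts on `Fin 2`
  have hms : ∀ m : Fin 2 →₀ ℕ, m = ms (m 0) (m 1) := by
    intro m
    refine Finsupp.ext fun i => ?_
    fin_cases i <;> simp [ms, Finsupp.single_apply]
  have hmsw : ∀ m : Fin 2 →₀ ℕ,
      Finsupp.mapDomain (Equiv.swap (0:Fin 2) 1) m = ms (m 1) (m 0) := by
    intro m
    conv_lhs => rw [hms m, ms]
    rw [Finsupp.mapDomain_add, Finsupp.mapDomain_single, Finsupp.mapDomain_single,
      Equiv.swap_apply_left, Equiv.swap_apply_right, ms, add_comm]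
  -- upper bound
  have hup : genLE τ n := by
    apply le_antisymm
    · exact Algebra.adjoin_le fun p hp => hp.1
    · intro p hp
      set A := Algebra.adjoin F
        {q : MvPolynomial (Fin 2) F | q ∈ invariants τ ∧ q.totalDegree ≤ n} with hA
      have hf2A : (X 0 * X 1 : MvPolynomial (Fin 2) F) ∈ A :=
        Algebra.subset_adjoin ⟨hf2, hdegf2⟩
      have hfnA : (X 0 ^ n + X 1 ^ n : MvPolynomial (Fin 2) F) ∈ A :=
        Algebra.subset_adjoin ⟨hfn, hdegfn⟩
      have hsym : rename (Equiv.swap (0:Fin 2) 1) p = p := by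
        have := hp (DihedralGroup.sr j)
        rw [hAs] at this
        exact this
      have hrew : p + rename (Equiv.swap (0:Fin 2) 1) p
          = ∑ m ∈ p.support, ((monomial m (coeff m p) : MvPolynomial (Fin 2) F)
              + monomial (ms (m 1) (m 0)) (coeff m p)) := by
        conv_lhs => rw [p.as_sum]
        rw [map_sum (rename (Equiv.swap (0:Fin 2) 1) :
          MvPolynomial (Fin 2) F →ₐ[F] MvPolynomial (Fin 2) F)]
        simp only [rename_monomial, hmsw]
        rw [← Finset.sum_add_distrib]
      have hsum : p + rename (Equiv.swap (0:Fin 2) 1) p ∈ A := by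
        rw [hrew]
        apply Subalgebra.sum_mem
        intro m hm
        have : (monomial m (coeff m p) : MvPolynomial (Fin 2) F)
              + monomial (ms (m 1) (m 0)) (coeff m p)
            = coeff m p • ((monomial (ms (m 0) (m 1)) (1:F)) + monomial (ms (m 1) (m 0)) 1) := by
          rw [smul_add, smul_monomial, smul_monomial, smul_eq_mul, mul_one, ← hms m]
        rw [this]
        exact A.smul_mem (pair_mem A hf2A hfnA (m 0) (m 1) (hmodm p hp m hm)) _
      have hhalf : p = C (2⁻¹ : F) * (p + rename (Equiv.swap (0:Fin 2) 1) p) := by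
        rw [hsym]
        have h2p : p + p = C (2:F) * p := by
          rw [← smul_eq_C_mul, two_smul]
        rw [h2p, ← mul_assoc, ← C_mul, inv_mul_cancel₀ h2F, C_1, one_mul]
      rw [hhalf]
      exact A.mul_mem (A.algebraMap_mem _) hsum
  -- lower bound
  have hlow : ∀ d, genLE τ d → n ≤ d := by
    intro d hd
    by_contra hlt
    push_neg at hlt
    have hdiag : ∀ p : MvPolynomial (Fin 2) F,
        p ∈ Algebra.adjoin F
          {q : MvPolynomial (Fin 2) F | q ∈ invariants τ ∧ q.totalDegree ≤ d} →
        ∀ m ∈ p.support, m 0 = m 1 := by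
      intro p hp
      induction hp using Algebra.adjoin_induction with
      | mem q hq =>
        intro m hm
        have h1 := hmodm q hq.1 m hm
        have h2 : (m.sum fun _ e => e) ≤ q.totalDegree := MvPolynomial.le_totalDegree hm
        have h3 : (m.sum fun _ e => e) = m 0 + m 1 := by
          rw [Finsupp.sum_fintype _ _ (fun i => rfl), Fin.sum_univ_two]
        rw [h3] at h2
        have h25 : q.totalDegree ≤ d := hq.2
        have h4 : m 0 < n := by omega
        have h5 : m 1 < n := by omega
        rwa [Nat.mod_eq_of_lt h4, Nat.mod_eq_of_lt h5] at h1
      | algebraMap r =>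
        intro m hm
        have := MvPolynomial.mem_support_iff.1 hm
        rw [MvPolynomial.algebraMap_eq, MvPolynomial.coeff_C] at this
        by_cases h : (0 : Fin 2 →₀ ℕ) = m
        · rw [← h]; rfl
        · rw [if_neg h] at this; exact absurd rfl this
      | add q r _ _ ihq ihr =>
        intro m hm
        rcases Finset.mem_union.1 (MvPolynomial.support_add hm) with h | h
        · exact ihq m h
        · exact ihr m h
      | mul q r _ _ ihq ihr =>
        intro m hm
        have := MvPolynomial.support_mul q r hm
        rw [Finset.mem_add] at this
        obtain ⟨a, ha, b, hb, rfl⟩ := this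
        have := ihq a ha
        have := ihr b hb
        simp only [Finsupp.add_apply]
        omega
    have hfn' : (X 0 ^ n + X 1 ^ n : MvPolynomial (Fin 2) F) ∈ Algebra.adjoin F
        {q : MvPolynomial (Fin 2) F | q ∈ invariants τ ∧ q.totalDegree ≤ d} := by
      rw [hd]; exact hfn
    have hcoeff : coeff (Finsupp.single 0 n) (X 0 ^ n + X 1 ^ n : MvPolynomial (Fin 2) F) = 1 := by
      rw [MvPolynomial.coeff_add, MvPolynomial.coeff_X_pow, MvPolynomial.coeff_X_pow,
        if_pos rfl, if_neg]
      · rw [add_zero]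
      · intro h
        rcases (Finsupp.single_eq_single_iff _ _ _ _).1 h with ⟨h1, _⟩ | ⟨h1, _⟩
        · exact absurd h1 (by decide)
        · exact hn0 h1
    have hmem : (Finsupp.single 0 n : Fin 2 →₀ ℕ) ∈
        (X 0 ^ n + X 1 ^ n : MvPolynomial (Fin 2) F).support := by
      rw [MvPolynomial.mem_support_iff, hcoeff]
      exact one_ne_zero
    have := hdiag _ hfn' _ hmem
    rw [Finsupp.single_apply, if_pos rfl, Finsupp.single_apply, if_neg (by decide)] at this
    exact hn0 this
  apply le_antisymm
  · exact Nat.sInf_le hup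
  · exact le_csInf ⟨n, hup⟩ hlow

/-- for the dihedral group `G` of order `2n`, its rotation subgroup `H`,
the one-dimensional `H`-module `V` given by a primitive `n`-th root of unity `ζ`, and
the induced two-dimensional `G`-module `W`, one has `β(G,W) = n = β(H,V)`. -/
theorem stmt7 {n : ℕ} (hn : 3 ≤ n) (ζ : F) (hζ : IsPrimitiveRoot ζ n)
    (hchar : ((2 * n : ℕ) : F) ≠ 0)
    (ρ : Representation F (Subgroup.zpowers (DihedralGroup.r 1 : DihedralGroup n))
      (Fin 1 → F))
    (hρ : ρ ⟨DihedralGroup.r 1, Subgroup.mem_zpowers _⟩ = ζ • LinearMap.id)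
    (σ : Representation F (DihedralGroup n) (Fin 2 → F))
    (ι : (Fin 1 → F) →ₗ[F] (Fin 2 → F)) (hι : Function.Injective ι)
    (hequiv : ∀ h : Subgroup.zpowers (DihedralGroup.r 1 : DihedralGroup n),
      σ h ∘ₗ ι = ι ∘ₗ ρ h)
    (C : Set (DihedralGroup n))
    (hC : Subgroup.IsComplement C
      ((Subgroup.zpowers (DihedralGroup.r 1 : DihedralGroup n) : Subgroup (DihedralGroup n)) : Set (DihedralGroup n)))
    (h1 : (1 : DihedralGroup n) ∈ C)
    (hindep : iSupIndep fun c : C => (LinearMap.range ι).map (σ c.1))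
    (hspan : ⨆ c : C, (LinearMap.range ι).map (σ c.1) = ⊤) :
    noether σ = n ∧ noether ρ = n := by
  have hn0 : n ≠ 0 := by omega
  haveI : NeZero n := ⟨hn0⟩
  have hζ0 : ζ ≠ 0 := hζ.ne_zero hn0
  have h2F : (2 : F) ≠ 0 := by
    intro h
    apply hchar
    push_cast
    rw [h, zero_mul]
  set h0 : (Subgroup.zpowers (DihedralGroup.r 1 : DihedralGroup n)) :=
    ⟨DihedralGroup.r 1, Subgroup.mem_zpowers _⟩ with hh0
  -- generation of the cyclic subgroup
  have hfin : IsOfFinOrder (DihedralGroup.r 1 : DihedralGroup n) := by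
    rw [← orderOf_pos_iff, DihedralGroup.orderOf_r_one]
    omega
  have hgen : ∀ g : (Subgroup.zpowers (DihedralGroup.r 1 : DihedralGroup n)),
      ∃ k : ℕ, h0 ^ k = g := by
    intro g
    have hg := hfin.mem_powers_iff_mem_zpowers.2 g.2
    obtain ⟨k, hk⟩ := hg
    exact ⟨k, Subtype.ext (by rw [← hk]; rfl)⟩
  have hρn : noether ρ = n := partA hn ζ hζ h0 hgen ρ hρ
  refine ⟨?_, hρn⟩
  -- part B setup
  -- cardinality of C
  have hcardC : Nat.card C = 2 := by
    have hmul := hC.card_mul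
    rw [DihedralGroup.nat_card, SetLike.coe_sort_coe] at hmul
    have hH : Nat.card (Subgroup.zpowers (DihedralGroup.r 1 : DihedralGroup n)) = n := by
      rw [Nat.card_zpowers, DihedralGroup.orderOf_r_one]
    rw [hH] at hmul
    have : Nat.card C * n = 2 * n := hmul
    exact Nat.eq_of_mul_eq_mul_right (by omega) this
  -- extract the reflection
  obtain ⟨a, b, hab, hC2⟩ := Set.ncard_eq_two.1 (by rw [← Nat.card_coe_set_eq, hcardC])
  have hs : ∃ s : DihedralGroup n, s ∈ C ∧ s ≠ 1 ∧ C = {1, s} := by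
    have h1' := h1
    rw [hC2] at h1'
    rcases h1' with h | h
    · exact ⟨b, by rw [hC2]; right; rfl, by rw [← h] at hab; exact (Ne.symm hab),
        by rw [hC2, ← h]⟩
    · exact ⟨a, by rw [hC2]; left; rfl, by rw [← h] at hab; exact hab,
        by rw [hC2, ← h, Set.pair_comm]⟩
  obtain ⟨s, hsC, hs1, hCs⟩ := hs
  -- s is not a rotation
  have hsH : s ∉ Subgroup.zpowers (DihedralGroup.r 1 : DihedralGroup n) := by
    intro hmem
    have hinj := hC.1
    have : (⟨⟨1, h1⟩, ⟨s, hmem⟩⟩ :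
        C × (Subgroup.zpowers (DihedralGroup.r 1 : DihedralGroup n) : Set (DihedralGroup n)))
        = ⟨⟨s, hsC⟩, ⟨1, Subgroup.one_mem _⟩⟩ := by
      apply hinj
      show (1 : DihedralGroup n) * s = s * 1
      rw [one_mul, mul_one]
    have := congrArg (fun x => x.1.1) this
    exact hs1 (this.symm : s = 1)
  -- s is a reflection
  obtain ⟨js, hjs⟩ : ∃ js : ZMod n, s = DihedralGroup.sr js := by
    match hms : s with
    | .r k =>
      exfalso
      apply hsH
      refine Subgroup.mem_zpowers_iff.2 ⟨(k.val : ℤ), ?_⟩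
      show (DihedralGroup.r 1 : DihedralGroup n) ^ ((k.val : ℕ) : ℤ) = DihedralGroup.r k
      rw [zpow_natCast, DihedralGroup.r_one_pow]
      congr 1
      simp [ZMod.natCast_val, ZMod.cast_id]
    | .sr k => exact ⟨k, rfl⟩
  subst hjs
  -- linear algebra setup
  set v0 : Fin 1 → F := Pi.single 0 1 with hv0def
  set e : Fin 2 → F := ι v0 with hedef
  set f : Fin 2 → F := σ (DihedralGroup.sr js) e with hfdef
  have hv0 : ∀ v : Fin 1 → F, v = v 0 • v0 := by
    intro v
    ext i
    have : i = 0 := Subsingleton.elim i 0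
    subst this
    simp [hv0def, Pi.single_apply]
  have hrange : LinearMap.range ι = Submodule.span F {e} := by
    apply le_antisymm
    · rintro w ⟨v, rfl⟩
      rw [hv0 v, map_smul]
      exact Submodule.smul_mem _ _ (Submodule.mem_span_singleton_self e)
    · rw [Submodule.span_le, Set.singleton_subset_iff]
      exact ⟨v0, rfl⟩
  have hσre : σ (DihedralGroup.r 1) e = ζ • e := by
    have h := LinearMap.congr_fun (hequiv h0) v0
    simp only [LinearMap.comp_apply] at h
    rw [hρ] at h
    simp only [LinearMap.smul_apply, LinearMap.id_apply, map_smul] at h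
    exact h
  have hρinv : ∀ v : Fin 1 → F, ρ h0⁻¹ v = ζ⁻¹ • v := by
    intro v
    have h1 : ρ h0 (ζ⁻¹ • v) = v := by
      rw [hρ]
      simp [smul_smul, mul_inv_cancel₀ hζ0, inv_mul_cancel₀ hζ0]
    have h2 : ρ h0⁻¹ (ρ h0 (ζ⁻¹ • v)) = ζ⁻¹ • v := by
      rw [← Module.End.mul_apply, ← map_mul, inv_mul_cancel, map_one, Module.End.one_apply]
    rw [h1] at h2
    exact h2
  have hσinve : σ (DihedralGroup.r (-1)) e = ζ⁻¹ • e := by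
    have h := LinearMap.congr_fun (hequiv h0⁻¹) v0
    simp only [LinearMap.comp_apply] at h
    rw [hρinv v0] at h
    have hcoe : ((h0⁻¹ : Subgroup.zpowers (DihedralGroup.r 1 : DihedralGroup n)) :
        DihedralGroup n) = DihedralGroup.r (-1) := rfl
    rw [hcoe] at h
    rw [h, map_smul]
  have hσrf : σ (DihedralGroup.r 1) f = ζ⁻¹ • f := by
    have hmul : (DihedralGroup.r 1 : DihedralGroup n) * DihedralGroup.sr js
        = DihedralGroup.sr js * DihedralGroup.r (-1) := by
      rw [DihedralGroup.r_mul_sr, DihedralGroup.sr_mul_r]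
      congr 1
      ring
    rw [hfdef, ← Module.End.mul_apply, ← map_mul, hmul, map_mul, Module.End.mul_apply,
      hσinve, map_smul]
  have hσsf : σ (DihedralGroup.sr js) f = e := by
    rw [hfdef, ← Module.End.mul_apply, ← map_mul, DihedralGroup.sr_mul_self, map_one,
      Module.End.one_apply]
  have he0 : e ≠ 0 := by
    intro h
    have : v0 = 0 := hι (by rw [← hedef] at *; rw [h, map_zero])
    have := congrFun this 0
    simp [hv0def] at this
  have hf0 : f ≠ 0 := by
    intro h
    apply he0
    rw [← hσsf, h, map_zero]
  have hspan2 : Submodule.span F {e, f} = ⊤ := by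
    rw [eq_top_iff, ← hspan]
    apply iSup_le
    intro c
    have hc : (c : DihedralGroup n) ∈ ({1, DihedralGroup.sr js} : Set (DihedralGroup n)) := by
      rw [← hCs]; exact c.2
    rcases hc with h | h
    · rw [h, map_one]
      have : Submodule.map (1 : (Fin 2 → F) →ₗ[F] (Fin 2 → F)) (LinearMap.range ι)
          = LinearMap.range ι := Submodule.map_id _
      rw [this, hrange]
      exact Submodule.span_mono (by simp)
    · rw [h, hrange, Submodule.map_span, Set.image_singleton]
      exact Submodule.span_mono (by simp [hfdef])
  have hdisj : Disjoint (Submodule.span F {e}) (Submodule.span F {f}) := by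
    have hd : Disjoint (Submodule.map (σ (1 : DihedralGroup n)) (LinearMap.range ι))
        (⨆ (c : C) (_ : c ≠ (⟨1, h1⟩ : C)), Submodule.map (σ c.1) (LinearMap.range ι)) :=
      hindep (⟨1, h1⟩ : C)
    have h1map : Submodule.map (σ 1) (LinearMap.range ι) = Submodule.span F {e} := by
      rw [map_one, hrange]
      exact Submodule.map_id _
    rw [h1map] at hd
    refine hd.mono_right ?_
    have hsne : ((⟨DihedralGroup.sr js, hsC⟩ : C)) ≠ (⟨1, h1⟩ : C) := by
      intro hcontra
      exact hs1 (congrArg Subtype.val hcontra)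
    refine le_trans ?_ (le_iSup₂ (f := fun (c : C) (_ : c ≠ ⟨1, h1⟩) =>
      Submodule.map (σ c.1) (LinearMap.range ι)) (⟨DihedralGroup.sr js, hsC⟩ : C) hsne)
    rw [hrange, Submodule.map_span, Set.image_singleton]
  have hli : LinearIndependent F ![e, f] := by
    rw [LinearIndependent.pair_iff]
    intro a b hab
    have h1 : a • e ∈ Submodule.span F {e} :=
      Submodule.smul_mem _ _ (Submodule.mem_span_singleton_self e)
    have h2 : a • e ∈ Submodule.span F {f} := by
      have : a • e = -(b • f) := by
        rw [eq_neg_iff_add_eq_zero]; exact hab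
      rw [this]
      exact Submodule.neg_mem _ (Submodule.smul_mem _ _ (Submodule.mem_span_singleton_self f))
    have h3 : a • e = 0 := Submodule.disjoint_def.1 hdisj _ h1 h2
    have ha : a = 0 := by
      rcases smul_eq_zero.1 h3 with h | h
      · exact h
      · exact absurd h he0
    subst ha
    rw [zero_smul, zero_add] at hab
    rcases smul_eq_zero.1 hab with h | h
    · exact ⟨rfl, h⟩
    · exact absurd h hf0
  have hrangepair : Set.range ![e, f] = {e, f} := by
    ext x
    simp [Fin.exists_fin_two, eq_comm, or_comm]
  let b : Module.Basis (Fin 2) F (Fin 2 → F) := Module.Basis.mk hli (by rw [hrangepair, hspan2])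
  let T : (Fin 2 → F) ≃ₗ[F] (Fin 2 → F) := (Pi.basisFun F (Fin 2)).equiv b (Equiv.refl _)
  have hT0 : T (Pi.single 0 1) = e := by
    rw [show (Pi.single 0 1 : Fin 2 → F) = Pi.basisFun F (Fin 2) 0 from
      (Pi.basisFun_apply F (Fin 2) 0).symm]
    rw [show T (Pi.basisFun F (Fin 2) 0) = b 0 from Module.Basis.equiv_apply _ 0 _ _]
    show Module.Basis.mk hli _ 0 = e
    rw [Module.Basis.mk_apply]
    rfl
  have hT1 : T (Pi.single 1 1) = f := by
    rw [show (Pi.single 1 1 : Fin 2 → F) = Pi.basisFun F (Fin 2) 1 from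
      (Pi.basisFun_apply F (Fin 2) 1).symm]
    rw [show T (Pi.basisFun F (Fin 2) 1) = b 1 from Module.Basis.equiv_apply _ 1 _ _]
    show Module.Basis.mk hli _ 1 = f
    rw [Module.Basis.mk_apply]
    rfl
  have hTs0 : T.symm e = Pi.single 0 1 := by rw [← hT0, LinearEquiv.symm_apply_apply]
  have hTs1 : T.symm f = Pi.single 1 1 := by rw [← hT1, LinearEquiv.symm_apply_apply]
  -- the conjugated representation
  let τ : Representation F (DihedralGroup n) (Fin 2 → F) :=
    { toFun := fun g => T.symm.toLinearMap ∘ₗ σ g ∘ₗ T.toLinearMap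
      map_one' := by
        refine LinearMap.ext fun v => ?_
        simp [map_one, Module.End.one_apply]
      map_mul' := fun g h => by
        refine LinearMap.ext fun v => ?_
        simp [map_mul, Module.End.mul_apply, LinearEquiv.apply_symm_apply] }
  have hconj : ∀ g, τ g = T.symm.toLinearMap ∘ₗ σ g ∘ₗ T.toLinearMap := fun g => rfl
  have hτr0 : τ (DihedralGroup.r 1) (Pi.single 0 1) = ζ • (Pi.single 0 1 : Fin 2 → F) := by
    show T.symm (σ (DihedralGroup.r 1) (T (Pi.single 0 1))) = _
    rw [hT0, hσre, map_smul, hTs0]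
  have hτr1 : τ (DihedralGroup.r 1) (Pi.single 1 1) = ζ⁻¹ • (Pi.single 1 1 : Fin 2 → F) := by
    show T.symm (σ (DihedralGroup.r 1) (T (Pi.single 1 1))) = _
    rw [hT1, hσrf, map_smul, hTs1]
  have hτs0 : τ (DihedralGroup.sr js) (Pi.single 0 1) = (Pi.single 1 1 : Fin 2 → F) := by
    show T.symm (σ (DihedralGroup.sr js) (T (Pi.single 0 1))) = _
    rw [hT0, ← hfdef, hTs1]
  have hτs1 : τ (DihedralGroup.sr js) (Pi.single 1 1) = (Pi.single 0 1 : Fin 2 → F) := by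
    show T.symm (σ (DihedralGroup.sr js) (T (Pi.single 1 1))) = _
    rw [hT1, hσsf, hTs0]
  -- algebra maps of the generators
  have hAr : algOf (τ (DihedralGroup.r 1))
      = aeval (fun i : Fin 2 => (if i = (0:Fin 2) then ζ else ζ⁻¹) • X i) := by
    apply MvPolynomial.algHom_ext
    intro i
    simp only [algOf, aeval_X]
    fin_cases i
    · show (∑ i : Fin 2, (τ (DihedralGroup.r 1)) (Pi.single 0 1) i • X i)
        = (if (0:Fin 2) = (0:Fin 2) then ζ else ζ⁻¹) • X 0
      rw [hτr0, Fin.sum_univ_two]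
      simp [Pi.single_apply]
    · show (∑ i : Fin 2, (τ (DihedralGroup.r 1)) (Pi.single 1 1) i • X i)
        = (if (1:Fin 2) = (0:Fin 2) then ζ else ζ⁻¹) • X 1
      rw [hτr1, Fin.sum_univ_two]
      simp [Pi.single_apply]
  have hAs : algOf (τ (DihedralGroup.sr js))
      = (rename (Equiv.swap (0:Fin 2) 1) :
        MvPolynomial (Fin 2) F →ₐ[F] MvPolynomial (Fin 2) F) := by
    apply MvPolynomial.algHom_ext
    intro i
    simp only [algOf, aeval_X, rename_X]
    fin_cases i
    · show (∑ i : Fin 2, (τ (DihedralGroup.sr js)) (Pi.single 0 1) i • X i)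
        = X (Equiv.swap (0:Fin 2) 1 0)
      rw [hτs0, Fin.sum_univ_two, Equiv.swap_apply_left]
      simp [Pi.single_apply]
    · show (∑ i : Fin 2, (τ (DihedralGroup.sr js)) (Pi.single 1 1) i • X i)
        = X (Equiv.swap (0:Fin 2) 1 1)
      rw [hτs1, Fin.sum_univ_two, Equiv.swap_apply_right]
      simp [Pi.single_apply]
  have hτn : noether τ = n := partB' hn ζ hζ h2F τ js hAr hAs
  -- transport along the change of basis
  have hconj2 : ∀ g, σ g = T.symm.symm.toLinearMap ∘ₗ τ g ∘ₗ T.symm.toLinearMap := by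
    intro g
    refine LinearMap.ext fun v => ?_
    show σ g v = T.symm.symm (τ g (T.symm v))
    rw [hconj g]
    show σ g v = T.symm.symm (T.symm (σ g (T (T.symm v))))
    rw [LinearEquiv.apply_symm_apply, LinearEquiv.symm_symm, LinearEquiv.apply_symm_apply]
  have hsets : {d | genLE σ d} = {d | genLE τ d} := by
    ext d
    exact ⟨fun h => genLE_conj τ σ T.symm hconj2 d h, fun h => genLE_conj σ τ T hconj d h⟩
  rw [show noether σ = sInf {d | genLE σ d} from rfl, hsets]
  exact hτn

end
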